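/- Let n ≥ 2, let κ = (κ_1, …, κ_n) be real parameters with κ_j > −1/2, and let F : ℝⁿ → ℝ be twice continuously differentiable. Define F̂ : ℝ^{n−1} → ℝ by F̂(λ_1, …, λ_{n−1}) := F(λ_1, …, λ_{n−1}, 1 − λ_1 − ⋯ − λ_{n−1}). Then for every λ' = (λ_1, …, λ_{n−1}) ∈ ℝ^{n−1}, one has (G_κ F̂)(λ') = (Ĝ_κ F)(λ_1, …, λ_{n−1}, 1 − λ_1 − ⋯ − λ_{n−1}). -/

import Mathlib

/-- Partial derivative `∂g/∂x_i` of a function `g : ℝᵐ → ℝ`. -/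
noncomputable def pd {m : ℕ} (i : Fin m) (g : (Fin m → ℝ) → ℝ)
    (x : Fin m → ℝ) : ℝ :=
  fderiv ℝ g x (Pi.single i 1)

/-- The general Jacobi-type operator in `m` variables with drift coefficients
`c j - s * x j`:
`Σ_j x_j(1-x_j) ∂²F/∂x_j² + Σ_j (c_j - s x_j) ∂F/∂x_j - Σ_{j≠ℓ} x_j x_ℓ ∂²F/∂x_j∂x_ℓ`. -/
noncomputable def jacobiOp (m : ℕ) (c : Fin m → ℝ) (s : ℝ)
    (F : (Fin m → ℝ) → ℝ) (x : Fin m → ℝ) : ℝ :=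
  (∑ j, x j * (1 - x j) * pd j (pd j F) x)
  + (∑ j, (c j - s * x j) * pd j F x)
  - ∑ j, ∑ ℓ, if j = ℓ then 0 else x j * x ℓ * pd j (pd ℓ F) x

namespace JacobiLiftAux

open Finset

/-- The affine embedding of `ℝ^m` onto the hyperplane `Σ x = 1` in `ℝ^{m+1}`. -/
noncomputable def emb (m : ℕ) (y : Fin m → ℝ) : Fin (m + 1) → ℝ :=
  fun j => if h : j.val < m then y ⟨j.val, h⟩ else 1 - ∑ k, y k

/-- The linear part of `emb`. -/
noncomputable def embL (m : ℕ) : (Fin m → ℝ) →L[ℝ] (Fin (m + 1) → ℝ) :=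
  ContinuousLinearMap.pi fun j =>
    if h : j.val < m then ContinuousLinearMap.proj ⟨j.val, h⟩
    else -(∑ k, ContinuousLinearMap.proj k)

lemma emb_castSucc {m : ℕ} (y : Fin m → ℝ) (j : Fin m) :
    emb m y j.castSucc = y j := by
  have h : (j.castSucc : Fin (m+1)).val < m := j.isLt
  simp [emb, h]

lemma emb_last {m : ℕ} (y : Fin m → ℝ) :
    emb m y (Fin.last m) = 1 - ∑ k, y k := by
  simp [emb]

lemma hasFDerivAt_emb {m : ℕ} (y : Fin m → ℝ) :
    HasFDerivAt (emb m) (embL m) y := by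
  apply hasFDerivAt_pi''
  intro j
  rw [embL, ContinuousLinearMap.proj_pi]
  by_cases h : j.val < m
  · have he : (fun x : Fin m → ℝ => emb m x j) = fun x => x ⟨j.val, h⟩ := by
      funext x; simp [emb, h]
    rw [he, dif_pos h]
    exact hasFDerivAt_apply (𝕜 := ℝ) ⟨j.val, h⟩ y
  · have he : (fun x : Fin m → ℝ => emb m x j) = fun x => 1 - ∑ k, x k := by
      funext x; simp [emb, h]
    rw [he, dif_neg h]
    have hsum : HasFDerivAt (fun x : Fin m → ℝ => ∑ k, x k)
        (∑ k : Fin m, ContinuousLinearMap.proj (R := ℝ) (φ := fun _ : Fin m => ℝ) k)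
        y := HasFDerivAt.fun_sum fun k _ => hasFDerivAt_apply (𝕜 := ℝ) k y
    exact hsum.const_sub 1

lemma embL_single {m : ℕ} (i : Fin m) :
    embL m (Pi.single i 1)
      = Pi.single i.castSucc 1 - Pi.single (Fin.last m) 1 := by
  funext j
  simp only [embL, ContinuousLinearMap.pi_apply, Pi.sub_apply]
  by_cases h : j.val < m
  · rw [dif_pos h]
    have hne : j ≠ Fin.last m := by
      intro hc
      rw [hc] at h
      simp at h
    rw [ContinuousLinearMap.proj_apply, Pi.single_apply, Pi.single_apply,
      Pi.single_apply, if_neg hne, sub_zero]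
    have hiff : ((⟨j.val, h⟩ : Fin m) = i) ↔ (j = i.castSucc) := by
      rw [Fin.ext_iff, Fin.ext_iff]
      simp
    by_cases hc : (⟨j.val, h⟩ : Fin m) = i
    · rw [if_pos hc, if_pos (hiff.1 hc)]
    · rw [if_neg hc, if_neg (fun hx => hc (hiff.2 hx))]
  · rw [dif_neg h]
    have hj : j = Fin.last m := by
      apply Fin.ext
      have := j.isLt
      simp only [Fin.val_last]
      omega
    subst hj
    have h2 : Pi.single (M := fun _ : Fin (m+1) => ℝ) i.castSucc 1 (Fin.last m)
        = 0 := by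
      rw [Pi.single_apply, if_neg (Fin.castSucc_lt_last i).ne']
    rw [h2, Pi.single_eq_same, ContinuousLinearMap.neg_apply,
      ContinuousLinearMap.sum_apply]
    simp only [ContinuousLinearMap.proj_apply]
    rw [Finset.sum_pi_single']
    simp

/-- Chain rule for partial derivatives through `emb`. -/
lemma pd_comp_emb {m : ℕ} (g : (Fin (m + 1) → ℝ) → ℝ) (y : Fin m → ℝ)
    (hg : DifferentiableAt ℝ g (emb m y)) (i : Fin m) :
    pd i (fun z => g (emb m z)) y
      = pd i.castSucc g (emb m y) - pd (Fin.last m) g (emb m y) := by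
  have hE := hasFDerivAt_emb (m := m) y
  have hcomp : HasFDerivAt (fun z => g (emb m z))
      ((fderiv ℝ g (emb m y)).comp (embL m)) y := hg.hasFDerivAt.comp y hE
  rw [pd, hcomp.fderiv, ContinuousLinearMap.comp_apply, embL_single, map_sub]
  rfl

lemma contDiff_pd {m : ℕ} (F : (Fin (m + 1) → ℝ) → ℝ) (hF : ContDiff ℝ 2 F)
    (a : Fin (m + 1)) : ContDiff ℝ 1 (pd a F) := by
  have h1 : ContDiff ℝ 1 (fderiv ℝ F) := hF.fderiv_right (by norm_num)
  exact h1.clm_apply contDiff_const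

lemma pd_sub {m : ℕ} (f g : (Fin m → ℝ) → ℝ) (y : Fin m → ℝ)
    (hf : DifferentiableAt ℝ f y) (hg : DifferentiableAt ℝ g y) (i : Fin m) :
    pd i (fun z => f z - g z) y = pd i f y - pd i g y := by
  unfold pd
  rw [fderiv_fun_sub hf hg]
  rfl

lemma pd_hat {m : ℕ} (F : (Fin (m + 1) → ℝ) → ℝ) (hF : ContDiff ℝ 2 F)
    (j : Fin m) :
    pd j (fun z => F (emb m z))
      = fun y => pd j.castSucc F (emb m y) - pd (Fin.last m) F (emb m y) :=
  funext fun y => pd_comp_emb F y (hF.differentiable two_ne_zero _) j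

lemma pd_pd_hat {m : ℕ} (F : (Fin (m + 1) → ℝ) → ℝ) (hF : ContDiff ℝ 2 F)
    (i j : Fin m) (y : Fin m → ℝ) :
    pd i (pd j (fun z => F (emb m z))) y
      = pd i.castSucc (pd j.castSucc F) (emb m y)
        - pd (Fin.last m) (pd j.castSucc F) (emb m y)
        - pd i.castSucc (pd (Fin.last m) F) (emb m y)
        + pd (Fin.last m) (pd (Fin.last m) F) (emb m y) := by
  rw [pd_hat F hF j]
  have hd : ∀ a : Fin (m + 1),
      DifferentiableAt ℝ (fun z => pd a F (emb m z)) y := fun a =>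
    DifferentiableAt.comp y
      (((contDiff_pd F hF a).differentiable one_ne_zero) (emb m y))
      (hasFDerivAt_emb y).differentiableAt
  have hsplit := pd_sub (fun z => pd j.castSucc F (emb m z))
    (fun z => pd (Fin.last m) F (emb m z)) y (hd _) (hd _) i
  rw [hsplit,
    pd_comp_emb _ _ (((contDiff_pd F hF _).differentiable one_ne_zero) _) i,
    pd_comp_emb _ _ (((contDiff_pd F hF _).differentiable one_ne_zero) _) i]
  ring

/-- The purely algebraic identity underlying the lift. -/
lemma alg (m : ℕ) (u c' : Fin m → ℝ) (s cL : ℝ) (hs : (∑ j, c' j) + cL = s)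
    (A : Fin m → Fin m → ℝ) (P Q : Fin m → ℝ) (R : ℝ)
    (B : Fin m → ℝ) (BL : ℝ) :
    ((∑ j, u j * (1 - u j) * (A j j - P j - Q j + R))
      + (∑ j, (c' j - s * u j) * (B j - BL))
      - ∑ j, ∑ ℓ, if j = ℓ then 0 else u j * u ℓ * (A j ℓ - P j - Q ℓ + R))
    = (((∑ j, u j * (1 - u j) * A j j)
        + (1 - ∑ k, u k) * (1 - (1 - ∑ k, u k)) * R)
      + ((∑ j, (c' j - s * u j) * B j)
        + (cL - s * (1 - ∑ k, u k)) * BL)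
      - ((∑ j, ((∑ ℓ, if j = ℓ then 0 else u j * u ℓ * A j ℓ)
          + u j * (1 - ∑ k, u k) * P j))
        + ((∑ ℓ, (1 - ∑ k, u k) * u ℓ * Q ℓ) + 0))) := by
  have offd : ∀ v : Fin m → Fin m → ℝ,
      (∑ j, ∑ ℓ, if j = ℓ then 0 else v j ℓ)
        = (∑ j, ∑ ℓ, v j ℓ) - ∑ j, v j j := by
    intro v
    rw [← Finset.sum_sub_distrib]
    refine Finset.sum_congr rfl fun j _ => ?_
    have h : ∀ ℓ : Fin m, (if j = ℓ then 0 else v j ℓ)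
        = v j ℓ - (if j = ℓ then v j ℓ else 0) := by
      intro ℓ; split <;> ring
    rw [Finset.sum_congr rfl fun ℓ _ => h ℓ, Finset.sum_sub_distrib,
      Finset.sum_ite_eq]
    simp
  have hdd : (∑ j, ∑ ℓ, u j * u ℓ * (A j ℓ - P j - Q ℓ + R))
      = (∑ j, ∑ ℓ, u j * u ℓ * A j ℓ)
        - (∑ j, u j * P j) * (∑ k, u k)
        - (∑ k, u k) * (∑ ℓ, u ℓ * Q ℓ)
        + (∑ k, u k) * (∑ k, u k) * R := by
    have inner : ∀ j : Fin m, (∑ ℓ, u j * u ℓ * (A j ℓ - P j - Q ℓ + R))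
        = (∑ ℓ, u j * u ℓ * A j ℓ) - u j * P j * (∑ k, u k)
          - u j * (∑ ℓ, u ℓ * Q ℓ) + u j * R * (∑ k, u k) := by
      intro j
      have h : ∀ ℓ : Fin m, u j * u ℓ * (A j ℓ - P j - Q ℓ + R)
          = u j * u ℓ * A j ℓ - u j * P j * u ℓ - u j * (u ℓ * Q ℓ)
            + u j * R * u ℓ := fun ℓ => by ring
      rw [Finset.sum_congr rfl fun ℓ _ => h ℓ]
      simp only [Finset.sum_add_distrib, Finset.sum_sub_distrib,
        ← Finset.mul_sum]
    rw [Finset.sum_congr rfl fun j _ => inner j]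
    simp only [Finset.sum_add_distrib, Finset.sum_sub_distrib,
      ← Finset.sum_mul]
    ring
  have e1 : (∑ j, u j * (1 - u j) * (A j j - P j - Q j + R))
      = (∑ j, u j * (1 - u j) * A j j)
        - ((∑ j, u j * P j) - ∑ j, u j * u j * P j)
        - ((∑ j, u j * Q j) - ∑ j, u j * u j * Q j)
        + ((∑ k, u k) - ∑ j, u j * u j) * R := by
    have h : ∀ j : Fin m, u j * (1 - u j) * (A j j - P j - Q j + R)
        = u j * (1 - u j) * A j j - (u j * P j - u j * u j * P j)
          - (u j * Q j - u j * u j * Q j) + (u j - u j * u j) * R :=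
      fun j => by ring
    rw [Finset.sum_congr rfl fun j _ => h j]
    simp only [Finset.sum_add_distrib, Finset.sum_sub_distrib,
      ← Finset.sum_mul]
  have e2 : (∑ j, u j * u j * (A j j - P j - Q j + R))
      = (∑ j, u j * u j * A j j) - (∑ j, u j * u j * P j)
        - (∑ j, u j * u j * Q j) + (∑ j, u j * u j) * R := by
    have h : ∀ j : Fin m, u j * u j * (A j j - P j - Q j + R)
        = u j * u j * A j j - u j * u j * P j - u j * u j * Q j
          + u j * u j * R := fun j => by ring
    rw [Finset.sum_congr rfl fun j _ => h j]
    simp only [Finset.sum_add_distrib, Finset.sum_sub_distrib,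
      ← Finset.sum_mul]
  have e3 : (∑ j, (c' j - s * u j) * (B j - BL))
      = (∑ j, (c' j - s * u j) * B j)
        - ((∑ j, c' j) - s * (∑ k, u k)) * BL := by
    have h : ∀ j : Fin m, (c' j - s * u j) * (B j - BL)
        = (c' j - s * u j) * B j - (c' j * BL - s * (u j * BL)) :=
      fun j => by ring
    rw [Finset.sum_congr rfl fun j _ => h j]
    simp only [Finset.sum_sub_distrib, ← Finset.sum_mul, ← Finset.mul_sum]
    ring
  have e4 : (∑ j, u j * (1 - ∑ k, u k) * P j)
      = (1 - ∑ k, u k) * ∑ j, u j * P j := by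
    rw [Finset.mul_sum]
    exact Finset.sum_congr rfl fun j _ => by ring
  have e5 : (∑ ℓ, (1 - ∑ k, u k) * u ℓ * Q ℓ)
      = (1 - ∑ k, u k) * ∑ ℓ, u ℓ * Q ℓ := by
    rw [Finset.mul_sum]
    exact Finset.sum_congr rfl fun ℓ _ => by ring
  have e6 : (∑ j, ((∑ ℓ, if j = ℓ then 0 else u j * u ℓ * A j ℓ)
        + u j * (1 - ∑ k, u k) * P j))
      = (∑ j, ∑ ℓ, if j = ℓ then 0 else u j * u ℓ * A j ℓ)
        + (1 - ∑ k, u k) * ∑ j, u j * P j := by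
    rw [Finset.sum_add_distrib, e4]
  rw [offd, e6, offd, hdd, e1, e2, e3, e5]
  linear_combination (-BL) * hs

end JacobiLiftAux

/-- Let `κ` be Jacobi parameters with `κ_j > -1/2`, `F : ℝⁿ → ℝ` a `C²`
function, and `F̂(λ₁,…,λ_{n-1}) = F(λ₁,…,λ_{n-1}, 1-λ₁-⋯-λ_{n-1})`. Then at
every point `λ'`, `(G_κ F̂)(λ')` equals the lifted Jacobi operator `Ĝ_κ`
applied to `F` at `(λ', 1 - Σ λ')`. -/
theorem jacobi_simplex_lift (n : ℕ) (hn : 2 ≤ n)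
    (κ : Fin n → ℝ) (hκ : ∀ j, -1/2 < κ j)
    (F : (Fin n → ℝ) → ℝ) (hF : ContDiff ℝ 2 F)
    (lam' : Fin (n - 1) → ℝ) :
    jacobiOp (n - 1)
        (fun j => κ ⟨j.val, lt_of_lt_of_le j.isLt (Nat.sub_le n 1)⟩ + 1/2)
        ((∑ k, κ k) + (n : ℝ)/2)
        (fun y => F (fun j => if h : j.val < n - 1 then y ⟨j.val, h⟩
          else 1 - ∑ k, y k)) lam'
      = jacobiOp n (fun j => κ j + 1/2) ((∑ k, κ k) + (n : ℝ)/2) F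
          (fun j => if h : j.val < n - 1 then lam' ⟨j.val, h⟩
            else 1 - ∑ k, lam' k) := by
  open JacobiLiftAux in
  obtain ⟨m, rfl⟩ : ∃ m, n = m + 1 := ⟨n - 1, by omega⟩
  set s : ℝ := (∑ k, κ k) + ((m : ℝ) + 1) / 2 with hsdef
  have hs0 : ((∑ k, κ k) + ((m + 1 : ℕ) : ℝ)/2) = s := by rw [hsdef]; push_cast; ring
  change jacobiOp m (fun j => κ j.castSucc + 1/2) ((∑ k, κ k) + ((m+1 : ℕ) : ℝ)/2)
      (fun y => F (JacobiLiftAux.emb m y)) lam'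
    = jacobiOp (m+1) (fun j => κ j + 1/2) ((∑ k, κ k) + ((m+1 : ℕ) : ℝ)/2) F
      (JacobiLiftAux.emb m lam')
  rw [hs0]
  have hsum : (∑ j : Fin m, (κ j.castSucc + 1/2)) + (κ (Fin.last m) + 1/2) = s := by
    rw [hsdef, ← Fin.sum_univ_castSucc (f := fun j => κ j + 1/2),
      Finset.sum_add_distrib, Finset.sum_const, Finset.card_univ, Fintype.card_fin,
      nsmul_eq_mul]
    push_cast
    ring
  have h1 : ∀ j : Fin m, pd j (fun y => F (emb m y)) lam'
      = pd j.castSucc F (emb m lam') - pd (Fin.last m) F (emb m lam') := fun j =>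
    pd_comp_emb F lam' ((hF.differentiable two_ne_zero) _) j
  have h2 : ∀ i j : Fin m, pd i (pd j (fun y => F (emb m y))) lam'
      = pd i.castSucc (pd j.castSucc F) (emb m lam')
        - pd (Fin.last m) (pd j.castSucc F) (emb m lam')
        - pd i.castSucc (pd (Fin.last m) F) (emb m lam')
        + pd (Fin.last m) (pd (Fin.last m) F) (emb m lam') := fun i j =>
    pd_pd_hat F hF i j lam'
  rw [jacobiOp, jacobiOp]
  have key := alg m lam' (fun j => κ j.castSucc + 1/2) s (κ (Fin.last m) + 1/2) hsum
    (fun a b => pd a.castSucc (pd b.castSucc F) (emb m lam'))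
    (fun a => pd a.castSucc (pd (Fin.last m) F) (emb m lam'))
    (fun b => pd (Fin.last m) (pd b.castSucc F) (emb m lam'))
    (pd (Fin.last m) (pd (Fin.last m) F) (emb m lam'))
    (fun a => pd a.castSucc F (emb m lam'))
    (pd (Fin.last m) F (emb m lam'))
  have eL1 : (∑ j : Fin m, lam' j * (1 - lam' j)
        * pd j (pd j (fun y => F (emb m y))) lam')
      = ∑ j : Fin m, lam' j * (1 - lam' j)
        * (pd j.castSucc (pd j.castSucc F) (emb m lam')
          - pd j.castSucc (pd (Fin.last m) F) (emb m lam')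
          - pd (Fin.last m) (pd j.castSucc F) (emb m lam')
          + pd (Fin.last m) (pd (Fin.last m) F) (emb m lam')) :=
    Finset.sum_congr rfl fun j _ => by rw [h2 j j]; ring
  have eL2 : (∑ j : Fin m, (κ j.castSucc + 1/2 - s * lam' j)
        * pd j (fun y => F (emb m y)) lam')
      = ∑ j : Fin m, (κ j.castSucc + 1/2 - s * lam' j)
        * (pd j.castSucc F (emb m lam') - pd (Fin.last m) F (emb m lam')) :=
    Finset.sum_congr rfl fun j _ => by rw [h1 j]
  have eL3 : (∑ j : Fin m, ∑ ℓ : Fin m, if j = ℓ then 0 else lam' j * lam' ℓ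
        * pd j (pd ℓ (fun y => F (emb m y))) lam')
      = ∑ j : Fin m, ∑ ℓ : Fin m, if j = ℓ then 0 else lam' j * lam' ℓ
        * (pd j.castSucc (pd ℓ.castSucc F) (emb m lam')
          - pd j.castSucc (pd (Fin.last m) F) (emb m lam')
          - pd (Fin.last m) (pd ℓ.castSucc F) (emb m lam')
          + pd (Fin.last m) (pd (Fin.last m) F) (emb m lam')) :=
    Finset.sum_congr rfl fun j _ => Finset.sum_congr rfl fun ℓ _ => by
      by_cases h : j = ℓ
      · simp [h]
      · rw [if_neg h, if_neg h, h2 j ℓ]; ring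
  rw [eL1, eL2, eL3]
  have hneq : ∀ j : Fin m, (j.castSucc = Fin.last m) ↔ False :=
    fun j => iff_false_intro (Fin.castSucc_lt_last j).ne
  have hneq' : ∀ j : Fin m, (Fin.last m = j.castSucc) ↔ False :=
    fun j => iff_false_intro (Fin.castSucc_lt_last j).ne'
  rw [Fin.sum_univ_castSucc (f := fun j => emb m lam' j * (1 - emb m lam' j)
      * pd j (pd j F) (emb m lam')),
    Fin.sum_univ_castSucc (f := fun j => (κ j + 1/2 - s * emb m lam' j)
      * pd j F (emb m lam')),
    Fin.sum_univ_castSucc (f := fun j => ∑ ℓ, if j = ℓ then 0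
      else emb m lam' j * emb m lam' ℓ * pd j (pd ℓ F) (emb m lam'))]
  simp only [Fin.sum_univ_castSucc (n := m), emb_castSucc, emb_last,
    Fin.castSucc_inj, hneq, hneq', if_false, eq_self_iff_true, if_true]
  rw [key]
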